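/- Let f be a C¹-smooth stationary Gaussian process with covariance kernel K and a spectral density. Then for every k ∈ ℕ and every injective tuple of points x₁, …, x_k ∈ ℝ, the Gaussian vector (f(x₁), …, f(x_k), f′(x₁), …, f′(x_k)) is non-degenerate; equivalently, the 2k × 2k symmetric matrix M with block entries M_{ij} = K(xᵢ − xⱼ), M_{i,k+j} = −K′(xᵢ − xⱼ), M_{k+i,j} = K′(xᵢ − xⱼ), and M_{k+i,k+j} = −K″(xᵢ − xⱼ) (for 1 ≤ i, j ≤ k) is positive definite. -/

import Mathlib

open MeasureTheory ProbabilityTheory Set Filter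

noncomputable section

section SgpAux

variable {ρ : ℝ → ℝ} (hρnn : ∀ s, 0 ≤ ρ s) (hρint : Integrable ρ)
  (hρ2 : Integrable (fun s => s ^ 2 * ρ s))

include hρnn hρint hρ2 in
lemma sgpaux_int_abs_rho : Integrable (fun s => |s| * ρ s) := by
  refine (hρint.add hρ2).mono' (continuous_abs.aestronglyMeasurable.mul hρint.1) ?_
  filter_upwards with s
  have h1 : |s| ≤ 1 + s ^ 2 := by nlinarith [abs_nonneg s, sq_abs s, sq_nonneg (|s| - 1)]
  have h2 := hρnn s
  have : ‖|s| * ρ s‖ = |s| * ρ s := by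
    rw [Real.norm_eq_abs, abs_of_nonneg (mul_nonneg (abs_nonneg s) h2)]
  rw [this]
  simp only [Pi.add_apply]
  nlinarith

include hρnn hρint in
lemma sgpaux_int_cos_rho (d : ℝ) : Integrable (fun s => Real.cos (d * s) * ρ s) := by
  refine hρint.mono' ((Real.continuous_cos.comp
    (continuous_const.mul continuous_id)).aestronglyMeasurable.mul hρint.1) ?_
  filter_upwards with s
  have h2 := hρnn s
  rw [Real.norm_eq_abs, abs_mul, abs_of_nonneg h2]
  exact mul_le_of_le_one_left h2 (Real.abs_cos_le_one _)

include hρnn hρint hρ2 in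
lemma sgpaux_int_sin_rho (d : ℝ) : Integrable (fun s => s * Real.sin (d * s) * ρ s) := by
  refine (sgpaux_int_abs_rho hρnn hρint hρ2).mono'
    (((continuous_id.mul (Real.continuous_sin.comp
      (continuous_const.mul continuous_id)))).aestronglyMeasurable.mul hρint.1) ?_
  filter_upwards with s
  have h2 := hρnn s
  rw [Real.norm_eq_abs, abs_mul, abs_of_nonneg h2, abs_mul]
  calc |s| * |Real.sin (d * s)| * ρ s ≤ |s| * 1 * ρ s :=
        mul_le_mul_of_nonneg_right
          (mul_le_mul_of_nonneg_left (Real.abs_sin_le_one _) (abs_nonneg s)) h2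
    _ = |s| * ρ s := by ring

include hρnn hρint hρ2 in
lemma sgpaux_int_sq_cos_rho (d : ℝ) : Integrable (fun s => s ^ 2 * Real.cos (d * s) * ρ s) := by
  refine hρ2.mono'
    (((continuous_pow 2).mul (Real.continuous_cos.comp
      (continuous_const.mul continuous_id))).aestronglyMeasurable.mul hρint.1) ?_
  filter_upwards with s
  have h2 := hρnn s
  rw [Real.norm_eq_abs, abs_mul, abs_of_nonneg h2, abs_mul, abs_of_nonneg (sq_nonneg s)]
  calc s ^ 2 * |Real.cos (d * s)| * ρ s ≤ s ^ 2 * 1 * ρ s :=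
        mul_le_mul_of_nonneg_right
          (mul_le_mul_of_nonneg_left (Real.abs_cos_le_one _) (sq_nonneg s)) h2
    _ = s ^ 2 * ρ s := by ring

variable {K : ℝ → ℝ} (hK : ∀ x, K x = ∫ s, Real.cos (x * s) * ρ s)

include hρnn hρint hρ2 hK in
lemma sgpaux_hasDerivAt_K (y : ℝ) :
    HasDerivAt K (∫ s, -(s * Real.sin (y * s)) * ρ s) y := by
  have main := hasDerivAt_integral_of_dominated_loc_of_deriv_le
    (F := fun (t : ℝ) (s : ℝ) => Real.cos (t * s) * ρ s)
    (F' := fun (t : ℝ) (s : ℝ) => -(s * Real.sin (t * s)) * ρ s)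
    (bound := fun s => |s| * ρ s) (x₀ := y) (μ := volume) (Metric.ball_mem_nhds y one_pos)
    (Eventually.of_forall fun t =>
      ((Real.continuous_cos.comp (continuous_const.mul continuous_id)).aestronglyMeasurable.mul
        hρint.1))
    (sgpaux_int_cos_rho hρnn hρint y)
    (((continuous_id.mul (Real.continuous_sin.comp
        (continuous_const.mul continuous_id))).neg.aestronglyMeasurable).mul hρint.1)
    ?_ (sgpaux_int_abs_rho hρnn hρint hρ2) ?_
  · have hfun : K = fun t => ∫ s, Real.cos (t * s) * ρ s := funext hK
    rw [hfun]
    exact main.2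
  · filter_upwards with s
    intro t _
    have h2 := hρnn s
    rw [Real.norm_eq_abs, abs_mul, abs_of_nonneg h2, abs_neg, abs_mul]
    calc |s| * |Real.sin (t * s)| * ρ s ≤ |s| * 1 * ρ s :=
          mul_le_mul_of_nonneg_right
            (mul_le_mul_of_nonneg_left (Real.abs_sin_le_one _) (abs_nonneg s)) h2
      _ = |s| * ρ s := by ring
  · filter_upwards with s
    intro t _
    have h := ((Real.hasDerivAt_cos (t * s)).comp t (hasDerivAt_mul_const s)).mul_const (ρ s)
    have he : (fun u : ℝ => Real.cos (u * s) * ρ s)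
        = fun u => (Real.cos ∘ fun x => x * s) u * ρ s := rfl
    rw [he]
    convert h using 1
    · rfl
    ring

include hρnn hρint hρ2 hK in
lemma sgpaux_hasDerivAt_K' (y : ℝ) :
    HasDerivAt (deriv K) (∫ s, -(s ^ 2 * Real.cos (y * s)) * ρ s) y := by
  have hd : deriv K = fun t => ∫ s, -(s * Real.sin (t * s)) * ρ s :=
    funext fun t => (sgpaux_hasDerivAt_K hρnn hρint hρ2 hK t).deriv
  rw [hd]
  have main := hasDerivAt_integral_of_dominated_loc_of_deriv_le
    (F := fun (t : ℝ) (s : ℝ) => -(s * Real.sin (t * s)) * ρ s)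
    (F' := fun (t : ℝ) (s : ℝ) => -(s ^ 2 * Real.cos (t * s)) * ρ s)
    (bound := fun s => s ^ 2 * ρ s) (x₀ := y) (μ := volume) (Metric.ball_mem_nhds y one_pos)
    (Eventually.of_forall fun t =>
      ((continuous_id.mul (Real.continuous_sin.comp
        (continuous_const.mul continuous_id))).neg.aestronglyMeasurable).mul hρint.1)
    ((sgpaux_int_sin_rho hρnn hρint hρ2 y).neg.congr
      (Eventually.of_forall fun s => by simp only [Pi.neg_apply]; ring))
    ((((continuous_pow 2).mul (Real.continuous_cos.comp
        (continuous_const.mul continuous_id))).neg.aestronglyMeasurable).mul hρint.1)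
    ?_ hρ2 ?_
  · exact main.2
  · filter_upwards with s
    intro t _
    have h2 := hρnn s
    rw [Real.norm_eq_abs, abs_mul, abs_of_nonneg h2, abs_neg, abs_mul,
      abs_of_nonneg (sq_nonneg s)]
    calc s ^ 2 * |Real.cos (t * s)| * ρ s ≤ s ^ 2 * 1 * ρ s :=
          mul_le_mul_of_nonneg_right
            (mul_le_mul_of_nonneg_left (Real.abs_cos_le_one _) (sq_nonneg s)) h2
      _ = s ^ 2 * ρ s := by ring
  · filter_upwards with s
    intro t _
    have h := ((((Real.hasDerivAt_sin (t * s)).comp t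
        (hasDerivAt_mul_const s)).const_mul s).neg).mul_const (ρ s)
    refine (h.congr_of_eventuallyEq
      (Eventually.of_forall fun u => by simp; try ring)).congr_deriv ?_
    ring

end SgpAux

section ExpIndep

lemma sgpaux_tendsto_mul_exp_neg (c : ℝ) (hc : c < 0) :
    Tendsto (fun t : ℝ => t * Real.exp (c * t)) atTop (nhds 0) := by
  have h1 : Tendsto (fun t : ℝ => (-c) * t) atTop atTop :=
    Tendsto.const_mul_atTop (by linarith) tendsto_id
  have h2 := (Real.tendsto_pow_mul_exp_neg_atTop_nhds_zero 1).comp h1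
  have h3 : Tendsto (fun t : ℝ => (-c⁻¹) * (((-c) * t) ^ 1 * Real.exp (-((-c) * t))))
      atTop (nhds ((-c⁻¹) * 0)) := h2.const_mul _
  rw [mul_zero] at h3
  refine h3.congr fun t => ?_
  have : c ≠ 0 := ne_of_lt hc
  field_simp

lemma sgpaux_tendsto_exp_neg (c : ℝ) (hc : c < 0) :
    Tendsto (fun t : ℝ => Real.exp (c * t)) atTop (nhds 0) := by
  refine Real.tendsto_exp_atBot.comp ?_
  exact (tendsto_const_mul_atBot_of_neg hc).2 tendsto_id

lemma sgpaux_exp_poly_indep {k : ℕ} (x : Fin k → ℝ) (hx : Function.Injective x)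
    (a b : Fin k → ℝ) (S : Finset (Fin k))
    (h : ∀ t : ℝ, ∑ j ∈ S, (a j + t * b j) * Real.exp (x j * t) = 0) :
    ∀ j ∈ S, a j = 0 ∧ b j = 0 := by
  induction S using Finset.strongInduction with
  | _ S ih =>
    intro j hj
    obtain ⟨J, hJ, hmax⟩ := S.exists_max_image x ⟨j, hj⟩
    have h1 : ∀ t : ℝ, ∑ i ∈ S, (a i + t * b i) * Real.exp ((x i - x J) * t) = 0 := by
      intro t
      have h0 : (∑ i ∈ S, (a i + t * b i) * Real.exp (x i * t)) * Real.exp (-(x J * t)) = 0 := by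
        rw [h t, zero_mul]
      rw [Finset.sum_mul] at h0
      rw [← h0]
      refine Finset.sum_congr rfl fun i _ => ?_
      rw [mul_assoc, ← Real.exp_add]
      ring_nf
    have h2 : ∀ t : ℝ, a J + t * b J =
        -∑ i ∈ S.erase J, (a i + t * b i) * Real.exp ((x i - x J) * t) := by
      intro t
      have := Finset.add_sum_erase S (fun i => (a i + t * b i) * Real.exp ((x i - x J) * t)) hJ
      rw [h1 t] at this
      beta_reduce at this
      have hJ0 : (a J + t * b J) * Real.exp ((x J - x J) * t) = a J + t * b J := by
        simp
      rw [hJ0] at this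
      linarith
    have hT : Tendsto (fun t : ℝ => a J + t * b J) atTop (nhds 0) := by
      have hsum : Tendsto (fun t : ℝ =>
          ∑ i ∈ S.erase J, (a i + t * b i) * Real.exp ((x i - x J) * t)) atTop (nhds 0) := by
        have h00 : (0 : ℝ) = ∑ i ∈ S.erase J, (0 : ℝ) := by simp
        rw [h00]
        refine tendsto_finset_sum _ fun i hi => ?_
        have hlt : x i - x J < 0 := by
          have hle : x i ≤ x J := hmax i (Finset.mem_of_mem_erase hi)
          have hne : x i ≠ x J := fun hEq => (Finset.ne_of_mem_erase hi) (hx hEq)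
          have := lt_of_le_of_ne hle hne
          linarith
        have t1 := (sgpaux_tendsto_exp_neg _ hlt).const_mul (a i)
        have t2 := (sgpaux_tendsto_mul_exp_neg _ hlt).const_mul (b i)
        rw [mul_zero] at t1 t2
        have := t1.add t2
        rw [add_zero] at this
        refine this.congr fun t => ?_
        ring
      have := hsum.neg
      rw [neg_zero] at this
      exact this.congr fun t => (h2 t).symm
    have hbJ : b J = 0 := by
      have hshift : Tendsto (fun t : ℝ => a J + (t + 1) * b J) atTop (nhds 0) :=
        hT.comp (tendsto_atTop_add_const_right atTop 1 tendsto_id)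
      have hdiff := hshift.sub hT
      rw [sub_zero] at hdiff
      have heq : (fun t : ℝ => a J + (t + 1) * b J - (a J + t * b J)) = fun _ => b J := by
        funext t; ring
      rw [heq] at hdiff
      exact tendsto_nhds_unique tendsto_const_nhds hdiff
    have haJ : a J = 0 := by
      have heq : (fun t : ℝ => a J + t * b J) = fun _ => a J := by
        funext t; rw [hbJ]; ring
      rw [heq] at hT
      exact tendsto_nhds_unique tendsto_const_nhds hT
    have hrest : ∀ t : ℝ, ∑ i ∈ S.erase J, (a i + t * b i) * Real.exp (x i * t) = 0 := by
      intro t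
      have := Finset.add_sum_erase S (fun i => (a i + t * b i) * Real.exp (x i * t)) hJ
      beta_reduce at this
      rw [h t, haJ, hbJ] at this
      simpa using this
    rcases eq_or_ne j J with rfl | hne
    · exact ⟨haJ, hbJ⟩
    · exact ih (S.erase J) (Finset.erase_ssubset hJ) hrest j (Finset.mem_erase_of_ne_of_mem hne hj)

end ExpIndep

section Psi

variable {k : ℕ} (x a b : Fin k → ℝ)

/-- Real part of the trigonometric polynomial. -/
def sgpA (s : ℝ) : ℝ := ∑ j, (a j * Real.cos (x j * s) - b j * (s * Real.sin (x j * s)))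

/-- Imaginary part of the trigonometric polynomial. -/
def sgpB (s : ℝ) : ℝ := ∑ j, (a j * Real.sin (x j * s) + b j * (s * Real.cos (x j * s)))

/-- The complexified trigonometric polynomial. -/
def sgpPsi (z : ℂ) : ℂ :=
  ∑ j, ((a j : ℂ) + z * (b j : ℂ) * Complex.I) * Complex.exp ((x j : ℂ) * z * Complex.I)

lemma sgpPsi_analytic : AnalyticOnNhd ℂ (sgpPsi x a b) univ := by
  rw [Complex.analyticOnNhd_univ_iff_differentiable]
  refine Differentiable.fun_sum fun j _ => Differentiable.mul ?_ ?_
  · exact (differentiable_const _).add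
      ((differentiable_id.mul (differentiable_const _)).mul (differentiable_const _))
  · exact Complex.differentiable_exp.comp
      (((differentiable_const _).mul differentiable_id).mul (differentiable_const _))

lemma sgpPsi_real (s : ℝ) :
    sgpPsi x a b (s : ℂ) = (sgpA x a b s : ℂ) + (sgpB x a b s : ℂ) * Complex.I := by
  have hterm : ∀ j : Fin k,
      ((a j : ℂ) + (s : ℂ) * (b j : ℂ) * Complex.I) * Complex.exp ((x j : ℂ) * (s : ℂ) * Complex.I)
      = ((a j * Real.cos (x j * s) - b j * (s * Real.sin (x j * s)) : ℝ) : ℂ) +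
        ((a j * Real.sin (x j * s) + b j * (s * Real.cos (x j * s)) : ℝ) : ℂ) * Complex.I := by
    intro j
    have harg : (x j : ℂ) * (s : ℂ) = ((x j * s : ℝ) : ℂ) := by push_cast; ring
    rw [harg, Complex.exp_mul_I, ← Complex.ofReal_cos, ← Complex.ofReal_sin]
    apply Complex.ext <;> simp <;> ring
  rw [sgpPsi, Finset.sum_congr rfl fun j _ => hterm j, Finset.sum_add_distrib, ← Finset.sum_mul,
    sgpA, sgpB]
  push_cast
  ring

lemma sgpPsi_neg_I (t : ℝ) :
    sgpPsi x a b (-(t : ℂ) * Complex.I) =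
      ((∑ j, (a j + t * b j) * Real.exp (x j * t)) : ℝ) := by
  have hterm : ∀ j : Fin k,
      ((a j : ℂ) + (-(t : ℂ) * Complex.I) * (b j : ℂ) * Complex.I) *
        Complex.exp ((x j : ℂ) * (-(t : ℂ) * Complex.I) * Complex.I)
      = (((a j + t * b j) * Real.exp (x j * t) : ℝ) : ℂ) := by
    intro j
    have harg : (x j : ℂ) * (-(t : ℂ) * Complex.I) * Complex.I = ((x j * t : ℝ) : ℂ) := by
      rw [show (x j : ℂ) * (-(t : ℂ) * Complex.I) * Complex.I
          = -((x j : ℂ) * (t : ℂ)) * (Complex.I * Complex.I) by ring, Complex.I_mul_I]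
      push_cast; ring
    have hcoef : (a j : ℂ) + (-(t : ℂ) * Complex.I) * (b j : ℂ) * Complex.I
        = ((a j + t * b j : ℝ) : ℂ) := by
      rw [show (-(t : ℂ) * Complex.I) * (b j : ℂ) * Complex.I
          = -((t : ℂ) * (b j : ℂ)) * (Complex.I * Complex.I) by ring, Complex.I_mul_I]
      push_cast; ring
    rw [harg, hcoef, ← Complex.ofReal_exp, ← Complex.ofReal_mul]
  rw [sgpPsi, Finset.sum_congr rfl fun j _ => hterm j, ← Complex.ofReal_sum]

end Psi

lemma sgpaux_dot_fromBlocks {k : ℕ} (P Q R S : Matrix (Fin k) (Fin k) ℝ) (a b : Fin k → ℝ) :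
    dotProduct (Sum.elim a b) ((Matrix.fromBlocks P Q R S).mulVec (Sum.elim a b)) =
    ∑ i, ∑ j, (a i * P i j * a j + a i * Q i j * b j + b i * R i j * a j + b i * S i j * b j) := by
  simp only [dotProduct, Matrix.mulVec, Fintype.sum_sum_type, Sum.elim_inl, Sum.elim_inr,
    Matrix.fromBlocks_apply₁₁, Matrix.fromBlocks_apply₁₂, Matrix.fromBlocks_apply₂₁,
    Matrix.fromBlocks_apply₂₂, Finset.mul_sum, Finset.sum_add_distrib]
  simp only [mul_add, Finset.mul_sum, Finset.sum_add_distrib]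
  ring_nf


section Cell

variable {k : ℕ} (ρ : ℝ → ℝ) (x a b : Fin k → ℝ)

/-- Integrand for entry `(i,j)` of the quadratic form. -/
def sgpCell (i j : Fin k) (s : ℝ) : ℝ :=
  ((a i * a j + s ^ 2 * (b i * b j)) * Real.cos ((x i - x j) * s)
    + s * (a i * b j - b i * a j) * Real.sin ((x i - x j) * s)) * ρ s

variable {ρ}
variable (hρnn : ∀ s, 0 ≤ ρ s) (hρint : Integrable ρ)
  (hρ2 : Integrable (fun s => s ^ 2 * ρ s))

include hρnn hρint hρ2 in
lemma sgpCell_integrable (i j : Fin k) : Integrable (sgpCell ρ x a b i j) := by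
  have h1 := (sgpaux_int_cos_rho hρnn hρint (x i - x j)).const_mul (a i * a j)
  have h2 := (sgpaux_int_sq_cos_rho hρnn hρint hρ2 (x i - x j)).const_mul (b i * b j)
  have h3 := (sgpaux_int_sin_rho hρnn hρint hρ2 (x i - x j)).const_mul (a i * b j - b i * a j)
  refine ((h1.add h2).add h3).congr (Eventually.of_forall fun s => ?_)
  simp only [Pi.add_apply, sgpCell]
  ring

variable {K : ℝ → ℝ} (hK : ∀ d, K d = ∫ s, Real.cos (d * s) * ρ s)

include hρnn hρint hρ2 hK in
lemma sgpCell_integral (i j : Fin k) :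
    ∫ s, sgpCell ρ x a b i j s
      = a i * a j * K (x i - x j) - b i * b j * deriv (deriv K) (x i - x j)
        - (a i * b j - b i * a j) * deriv K (x i - x j) := by
  have e1 : ∫ s, s * Real.sin ((x i - x j) * s) * ρ s = -(deriv K (x i - x j)) := by
    rw [(sgpaux_hasDerivAt_K hρnn hρint hρ2 hK _).deriv, ← integral_neg]
    congr 1; funext s; ring
  have e2 : ∫ s, s ^ 2 * Real.cos ((x i - x j) * s) * ρ s
      = -(deriv (deriv K) (x i - x j)) := by
    rw [(sgpaux_hasDerivAt_K' hρnn hρint hρ2 hK _).deriv, ← integral_neg]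
    congr 1; funext s; ring
  have hsplit : sgpCell ρ x a b i j = fun s =>
      (a i * a j) * (Real.cos ((x i - x j) * s) * ρ s)
      + ((b i * b j) * (s ^ 2 * Real.cos ((x i - x j) * s) * ρ s)
        + (a i * b j - b i * a j) * (s * Real.sin ((x i - x j) * s) * ρ s)) := by
    funext s; simp only [sgpCell]; ring
  have i1 : Integrable (fun s : ℝ => a i * a j * (Real.cos ((x i - x j) * s) * ρ s)) :=
    (sgpaux_int_cos_rho hρnn hρint _).const_mul _
  have i2 : Integrable (fun s : ℝ => b i * b j * (s ^ 2 * Real.cos ((x i - x j) * s) * ρ s)) :=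
    (sgpaux_int_sq_cos_rho hρnn hρint hρ2 _).const_mul _
  have i3 : Integrable (fun s : ℝ =>
      (a i * b j - b i * a j) * (s * Real.sin ((x i - x j) * s) * ρ s)) :=
    (sgpaux_int_sin_rho hρnn hρint hρ2 _).const_mul _
  have i23 : Integrable (fun s : ℝ => b i * b j * (s ^ 2 * Real.cos ((x i - x j) * s) * ρ s)
      + (a i * b j - b i * a j) * (s * Real.sin ((x i - x j) * s) * ρ s)) := i2.add i3
  rw [hsplit]
  beta_reduce
  rw [integral_add i1 i23, integral_add i2 i3,
    integral_const_mul, integral_const_mul, integral_const_mul, e1, e2, ← hK]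
  ring

lemma sgpCell_sum (s : ℝ) :
    (sgpA x a b s ^ 2 + sgpB x a b s ^ 2) * ρ s = ∑ i, ∑ j, sgpCell ρ x a b i j s := by
  rw [sgpA, sgpB, pow_two, pow_two, Finset.sum_mul_sum, Finset.sum_mul_sum,
    ← Finset.sum_add_distrib, Finset.sum_mul]
  refine Finset.sum_congr rfl fun i _ => ?_
  rw [← Finset.sum_add_distrib, Finset.sum_mul]
  refine Finset.sum_congr rfl fun j _ => ?_
  simp only [sgpCell]
  rw [show (x i - x j) * s = x i * s - x j * s by ring, Real.cos_sub, Real.sin_sub]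
  ring

end Cell


/-- A `C^m`-smooth stationary Gaussian process with covariance kernel `K`,
on a probability space `(Ω, P)`. -/
def IsSGP {Ω : Type*} [MeasurableSpace Ω] (P : Measure Ω) (m : ℕ)
    (f : Ω → ℝ → ℝ) (K : ℝ → ℝ) : Prop :=
  (∀ ω, ContDiff ℝ m (f ω)) ∧
  (∀ x y : ℝ, Integrable (fun ω => f ω x * f ω y) P) ∧
  (∀ x y : ℝ, (∫ ω, f ω x * f ω y ∂P) = K (x - y)) ∧
  (∀ (n : ℕ) (x a : Fin n → ℝ),
    Measure.map (fun ω => ∑ i, a i * f ω (x i)) P =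
      gaussianReal 0 (∑ i, ∑ j, a i * a j * K (x i - x j)).toNNReal) ∧
  0 < K 0

/-- A stationary Gaussian process with continuous sample paths and covariance kernel `K`. -/
def IsSGPCont {Ω : Type*} [MeasurableSpace Ω] (P : Measure Ω)
    (f : Ω → ℝ → ℝ) (K : ℝ → ℝ) : Prop :=
  (∀ ω, Continuous (f ω)) ∧
  (∀ x y : ℝ, Integrable (fun ω => f ω x * f ω y) P) ∧
  (∀ x y : ℝ, (∫ ω, f ω x * f ω y ∂P) = K (x - y)) ∧
  (∀ (n : ℕ) (x a : Fin n → ℝ),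
    Measure.map (fun ω => ∑ i, a i * f ω (x i)) P =
      gaussianReal 0 (∑ i, ∑ j, a i * a j * K (x i - x j)).toNNReal) ∧
  0 < K 0

/-- `K` is the Fourier transform of a nonnegative even integrable spectral density `ρ`,
with `s ^ (2m) * ρ s` integrable. -/
def HasSpectralDensity (m : ℕ) (K : ℝ → ℝ) : Prop :=
  ∃ ρ : ℝ → ℝ, (∀ s, 0 ≤ ρ s) ∧ (∀ s, ρ (-s) = ρ s) ∧
    Integrable ρ ∧ (∀ x, K x = ∫ s, Real.cos (x * s) * ρ s) ∧
    Integrable (fun s => s ^ (2 * m) * ρ s)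

/-- The gap event: `f` has no zero in `I`. -/
def GapEvent {Ω : Type*} (f : Ω → ℝ → ℝ) (I : Set ℝ) : Set Ω :=
  {ω | ∀ x ∈ I, f ω x ≠ 0}

/-- The gap probability `G(r) = P[no zero in [0,r]]`. -/
def gapProb {Ω : Type*} [MeasurableSpace Ω] (P : Measure Ω)
    (f : Ω → ℝ → ℝ) (r : ℝ) : ℝ :=
  (P (GapEvent f (Set.Icc 0 r))).toReal

/-- The scaling function `θ(r) = -log(-G'(r))`. -/
def scalingTheta {Ω : Type*} [MeasurableSpace Ω] (P : Measure Ω)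
    (f : Ω → ℝ → ℝ) (r : ℝ) : ℝ :=
  -Real.log (-(deriv (gapProb P f) r))

/-- The next zero of `g` strictly after `z`. -/
def nextZero (g : ℝ → ℝ) (z : ℝ) : ℝ := sInf {y : ℝ | z < y ∧ g y = 0}

/-- The largest gap between successive zeros of `g` starting in `[0, R]`
(equal to `0` if there is no zero, by the `sSup ∅ = 0` convention). -/
def largestGap (g : ℝ → ℝ) (R : ℝ) : ℝ :=
  sSup ((fun z => nextZero g z - z) '' {z | g z = 0 ∧ z ∈ Set.Icc 0 R})

/-- The location (left endpoint) of the largest gap in `[0, R]`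
(equal to `0` if there is no zero, by the `sInf ∅ = 0` convention). -/
def gapLocation (g : ℝ → ℝ) (R : ℝ) : ℝ :=
  sInf {z | g z = 0 ∧ z ∈ Set.Icc 0 R ∧ nextZero g z - z = largestGap g R}

/-- Super polynomial decay of correlations. -/
def InfPD (K : ℝ → ℝ) : Prop :=
  ∀ α : ℝ, 0 < α → Tendsto (fun x : ℝ => K x * x ^ α) atTop (nhds 0)

/-- Polynomial decay of correlations with exponent `α`: `K(x) ~ x⁻ᵅ`. -/
def AlphaPD (K : ℝ → ℝ) (α : ℝ) : Prop :=
  Tendsto (fun x : ℝ => K x * x ^ α) atTop (nhds 1)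

/-- `K̄(s) = sup_{x ≥ s} |K(x)|`. -/
def Kbar (K : ℝ → ℝ) (s : ℝ) : ℝ := sSup ((fun x => |K x|) '' Set.Ici s)

/-- non-degeneracy: for a `C¹`-smooth SGP with a spectral density and any
injective tuple of points, the covariance matrix of `(f(x₁),…,f(x_k),f'(x₁),…,f'(x_k))`
is positive definite. -/
theorem sgp_nondegenerate
    {Ω : Type*} [MeasurableSpace Ω] (P : Measure Ω) [IsProbabilityMeasure P]
    (f : Ω → ℝ → ℝ) (K : ℝ → ℝ)
    (hsgp : IsSGP P 1 f K) (hsd : HasSpectralDensity 1 K)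
    (k : ℕ) (x : Fin k → ℝ) (hx : Function.Injective x) :
    (Matrix.fromBlocks
      (Matrix.of fun i j => K (x i - x j))
      (Matrix.of fun i j => -(deriv K (x i - x j)))
      (Matrix.of fun i j => deriv K (x i - x j))
      (Matrix.of fun i j => -(deriv (deriv K) (x i - x j)))).PosDef := by
  classical
  obtain ⟨ρ, hρnn, hρeven, hρint, hKρ, hρ2'⟩ := hsd
  have hρ2 : Integrable (fun s : ℝ => s ^ 2 * ρ s) := by simpa using hρ2'
  have hK0 : 0 < K 0 := hsgp.2.2.2.2
  have hKeven : ∀ d : ℝ, K (-d) = K d := by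
    intro d; rw [hKρ, hKρ]; congr 1; funext s
    rw [show -d * s = -(d * s) by ring, Real.cos_neg]
  have hK1odd : ∀ d : ℝ, deriv K (-d) = -(deriv K d) := by
    intro d
    rw [(sgpaux_hasDerivAt_K hρnn hρint hρ2 hKρ (-d)).deriv,
      (sgpaux_hasDerivAt_K hρnn hρint hρ2 hKρ d).deriv, ← integral_neg]
    congr 1; funext s
    rw [show -d * s = -(d * s) by ring, Real.sin_neg]; ring
  have hK2even : ∀ d : ℝ, deriv (deriv K) (-d) = deriv (deriv K) d := by
    intro d
    rw [(sgpaux_hasDerivAt_K' hρnn hρint hρ2 hKρ (-d)).deriv,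
      (sgpaux_hasDerivAt_K' hρnn hρint hρ2 hKρ d).deriv]
    congr 1; funext s
    rw [show -d * s = -(d * s) by ring, Real.cos_neg]
  refine Matrix.PosDef.of_dotProduct_mulVec_pos ?_ ?_
  · -- symmetry
    ext p q
    rcases p with i | i <;> rcases q with j | j <;>
      simp only [Matrix.conjTranspose_apply, Matrix.fromBlocks_apply₁₁,
        Matrix.fromBlocks_apply₁₂, Matrix.fromBlocks_apply₂₁, Matrix.fromBlocks_apply₂₂,
        Matrix.of_apply, star_trivial]
    · rw [show x j - x i = -(x i - x j) by ring, hKeven]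
    · rw [show x j - x i = -(x i - x j) by ring, hK1odd]
    · rw [show x j - x i = -(x i - x j) by ring, hK1odd]; ring
    · rw [show x j - x i = -(x i - x j) by ring, hK2even]
  · intro v hv
    set a : Fin k → ℝ := fun i => v (Sum.inl i) with ha
    set b : Fin k → ℝ := fun i => v (Sum.inr i) with hb
    have hv' : v = Sum.elim a b := by funext p; rcases p with i | i <;> rfl
    have hstar : star v = v := star_trivial v
    rw [hstar, hv', sgpaux_dot_fromBlocks]
    simp only [Matrix.of_apply]
    -- rewrite the quadratic form as an integral
    have step1 : ∀ i j : Fin k,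
        a i * K (x i - x j) * a j + a i * -deriv K (x i - x j) * b j
          + b i * deriv K (x i - x j) * a j + b i * -deriv (deriv K) (x i - x j) * b j
        = ∫ s, sgpCell ρ x a b i j s := by
      intro i j
      rw [sgpCell_integral x a b hρnn hρint hρ2 hKρ i j]
      ring
    have e1 : ∑ i, ∑ j, (a i * K (x i - x j) * a j + a i * -deriv K (x i - x j) * b j
          + b i * deriv K (x i - x j) * a j + b i * -deriv (deriv K) (x i - x j) * b j)
        = ∫ s, (sgpA x a b s ^ 2 + sgpB x a b s ^ 2) * ρ s := by
      rw [Finset.sum_congr rfl fun i _ => Finset.sum_congr rfl fun j _ => step1 i j]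
      rw [show (∫ s, (sgpA x a b s ^ 2 + sgpB x a b s ^ 2) * ρ s)
          = ∫ s, ∑ i, ∑ j, sgpCell ρ x a b i j s from
        integral_congr_ae (Eventually.of_forall fun s => sgpCell_sum x a b s)]
      rw [integral_finset_sum _ fun i _ =>
        integrable_finset_sum _ fun j _ => sgpCell_integrable x a b hρnn hρint hρ2 i j]
      exact Finset.sum_congr rfl fun i _ =>
        (integral_finset_sum _ fun j _ => sgpCell_integrable x a b hρnn hρint hρ2 i j).symm
    rw [e1]
    -- positivity
    have hnnfun : ∀ s : ℝ, 0 ≤ (sgpA x a b s ^ 2 + sgpB x a b s ^ 2) * ρ s := fun s =>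
      mul_nonneg (by positivity) (hρnn s)
    have hIntegrable : Integrable (fun s => (sgpA x a b s ^ 2 + sgpB x a b s ^ 2) * ρ s) := by
      have hi : Integrable (fun s : ℝ => ∑ i : Fin k, ∑ j : Fin k, sgpCell ρ x a b i j s) :=
        integrable_finset_sum Finset.univ fun i _ =>
          integrable_finset_sum Finset.univ fun j _ =>
            sgpCell_integrable x a b hρnn hρint hρ2 i j
      exact hi.congr (Eventually.of_forall fun s => (sgpCell_sum x a b s).symm)
    rcases (integral_nonneg (f := fun s => (sgpA x a b s ^ 2 + sgpB x a b s ^ 2) * ρ s) hnnfun).lt_or_eq with hpos | hzero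
    · exact hpos
    · -- derive a contradiction from the vanishing of the integral
      exfalso
      have hae := (integral_eq_zero_iff_of_nonneg hnnfun hIntegrable).mp hzero.symm
      have hN : volume {s : ℝ | (sgpA x a b s ^ 2 + sgpB x a b s ^ 2) * ρ s ≠ 0} = 0 := by
        have h' := hae
        rw [Filter.EventuallyEq, ae_iff] at h'
        simpa using h'
      have hρne : volume {s : ℝ | ρ s ≠ 0} ≠ 0 := by
        intro h0
        have hz : ∀ᵐ s : ℝ, ρ s = 0 := by rw [ae_iff]; simpa using h0
        have hKz : K 0 = 0 := by
          rw [hKρ 0,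
            show (∫ s : ℝ, Real.cos (0 * s) * ρ s) = ∫ s : ℝ, ρ s by
              congr 1; funext s; simp]
          exact integral_eq_zero_of_ae hz
        linarith
      set W₀ : Set ℝ :=
        {s : ℝ | ρ s ≠ 0} \ {s : ℝ | (sgpA x a b s ^ 2 + sgpB x a b s ^ 2) * ρ s ≠ 0} with hW₀def
      have hW₀ : volume W₀ ≠ 0 := by
        intro h0
        apply hρne
        have hsub : {s : ℝ | ρ s ≠ 0}
            ⊆ W₀ ∪ {s : ℝ | (sgpA x a b s ^ 2 + sgpB x a b s ^ 2) * ρ s ≠ 0} := by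
          intro s hs
          by_cases hmem : s ∈ {s : ℝ | (sgpA x a b s ^ 2 + sgpB x a b s ^ 2) * ρ s ≠ 0}
          · exact Or.inr hmem
          · exact Or.inl ⟨hs, hmem⟩
        refine le_antisymm ?_ zero_le
        calc volume {s : ℝ | ρ s ≠ 0}
            ≤ volume (W₀ ∪ {s : ℝ | (sgpA x a b s ^ 2 + sgpB x a b s ^ 2) * ρ s ≠ 0}) :=
              measure_mono hsub
          _ ≤ volume W₀ + volume {s : ℝ | (sgpA x a b s ^ 2 + sgpB x a b s ^ 2) * ρ s ≠ 0} :=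
              measure_union_le _ _
          _ = 0 := by rw [h0, hN, add_zero]
      have hW₀AB : ∀ s ∈ W₀, sgpA x a b s = 0 ∧ sgpB x a b s = 0 := by
        intro s hs
        obtain ⟨hρs, hgood⟩ := hs
        have hzero2 : (sgpA x a b s ^ 2 + sgpB x a b s ^ 2) * ρ s = 0 := by
          by_contra hne; exact hgood hne
        have hsum0 : sgpA x a b s ^ 2 + sgpB x a b s ^ 2 = 0 := by
          rcases mul_eq_zero.mp hzero2 with h | h
          · exact h
          · exact absurd h hρs
        constructor
        · have := sq_nonneg (sgpA x a b s); have := sq_nonneg (sgpB x a b s)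
          nlinarith [sq_nonneg (sgpA x a b s), sq_nonneg (sgpB x a b s)]
        · nlinarith [sq_nonneg (sgpA x a b s), sq_nonneg (sgpB x a b s)]
      obtain ⟨n, hn⟩ : ∃ n : ℕ, volume (W₀ ∩ Icc (-(n : ℝ)) n) ≠ 0 := by
        by_contra hall
        push_neg at hall
        apply hW₀
        have hcover : W₀ ⊆ ⋃ n : ℕ, W₀ ∩ Icc (-(n : ℝ)) n := by
          intro s hs
          obtain ⟨n, hns⟩ := exists_nat_ge |s|
          exact mem_iUnion.2 ⟨n, hs,
            ⟨by linarith [neg_abs_le s], by linarith [le_abs_self s]⟩⟩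
        refine le_antisymm ?_ zero_le
        calc volume W₀ ≤ volume (⋃ n : ℕ, W₀ ∩ Icc (-(n : ℝ)) n) := measure_mono hcover
          _ = 0 := measure_iUnion_null hall
      have hWinf : (W₀ ∩ Icc (-(n : ℝ)) n).Infinite := by
        by_contra hfin
        rw [Set.not_infinite] at hfin
        exact hn (hfin.measure_zero _)
      obtain ⟨x₀, hx₀mem, hacc⟩ :=
        hWinf.exists_accPt_of_subset_isCompact isCompact_Icc inter_subset_right
      have hfreq : ∃ᶠ s in nhdsWithin x₀ {x₀}ᶜ, s ∈ W₀ ∩ Icc (-(n : ℝ)) n := by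
        rw [frequently_nhdsWithin_iff]
        exact (accPt_iff_frequently.mp hacc).mono fun y hy => ⟨hy.2, hy.1⟩
      have hmap : Tendsto (fun s : ℝ => (s : ℂ)) (nhdsWithin x₀ {x₀}ᶜ)
          (nhdsWithin (x₀ : ℂ) {(x₀ : ℂ)}ᶜ) := by
        refine ContinuousWithinAt.tendsto_nhdsWithin
          Complex.continuous_ofReal.continuousWithinAt ?_
        intro s hs hsc
        simp only [mem_compl_iff, mem_singleton_iff] at hs hsc
        exact hs (Complex.ofReal_injective hsc)
      have hfreqC : ∃ᶠ z in nhdsWithin (x₀ : ℂ) {(x₀ : ℂ)}ᶜ, sgpPsi x a b z = 0 := by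
        refine hmap.frequently (hfreq.mono fun s hs => ?_)
        obtain ⟨hA, hB⟩ := hW₀AB s hs.1
        rw [sgpPsi_real, hA, hB]
        simp
      have hzeroPsi : EqOn (sgpPsi x a b) 0 univ :=
        (sgpPsi_analytic x a b).eqOn_zero_of_preconnected_of_frequently_eq_zero
          isPreconnected_univ (mem_univ _) hfreqC
      have hrealeq : ∀ t : ℝ, ∑ j, (a j + t * b j) * Real.exp (x j * t) = 0 := by
        intro t
        have h1 := hzeroPsi (mem_univ (-(t : ℂ) * Complex.I))
        rw [sgpPsi_neg_I] at h1
        simp only [Pi.zero_apply] at h1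
        exact_mod_cast h1
      have hab := sgpaux_exp_poly_indep x hx a b Finset.univ hrealeq
      apply hv
      funext p
      rcases p with i | i
      · exact (hab i (Finset.mem_univ i)).1
      · exact (hab i (Finset.mem_univ i)).2
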